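/- Suppose F satisfies (F1)–(F3), each estimator η_N satisfies (A1)–(A2), and the perturbed contraction property holds: there are constants 0 < q < 1 and C₇ > 0 with η_{N+1}(u*_{N+1})² ≤ q η_N(u*_N)² + C₇ ‖u*_{N+1} − u*_N‖_X² for all N ≥ 0. Set γ := ν/(2C₇), Δ_N := H(u*_N) − H(u*) + γ η_N(u*_N)², and q_Δ := (L C₂² + 2γq)/(L C₂² + 2γ). Then q < q_Δ < 1 and Δ_{N+1} ≤ q_Δ Δ_N for all N ≥ 0; in particular Δ_{N+K} ≤ q_Δ^K Δ_N for all N, K ≥ 0. -/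

import Mathlib

set_option autoImplicit false


private lemma aux_mono (f f' : ℝ → ℝ) (hf : ∀ x, HasDerivAt f (f' x) x)
    (h : ∀ x ∈ Set.Icc (0:ℝ) 1, 0 ≤ f' x) : f 0 ≤ f 1 := by
  have hd : Differentiable ℝ f := fun x => (hf x).differentiableAt
  have hmono := monotoneOn_of_deriv_nonneg (convex_Icc (0:ℝ) 1)
    hd.continuous.continuousOn (fun x _ => (hd x).differentiableWithinAt)
    (fun x hx => by
      rw [(hf x).deriv]
      exact h x (interior_subset hx))
  exact hmono (Set.left_mem_Icc.2 zero_le_one) (Set.right_mem_Icc.2 zero_le_one) zero_le_one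

private lemma key_bounds {X : Type*} [NormedAddCommGroup X] [InnerProductSpace ℝ X]
    (F : X → X →L[ℝ] ℝ) (L ν : ℝ)
    (hF1 : ∀ u v w : X, |F u w - F v w| ≤ L * ‖u - v‖ * ‖w‖)
    (hF2 : ∀ u v : X, ν * ‖u - v‖ ^ 2 ≤ F u (u - v) - F v (u - v))
    (H : X → ℝ)
    (hF3 : ∀ v w : X, ∀ t : ℝ, HasDerivAt (fun s : ℝ => H (v + s • w)) (F (v + t • w) w) t)
    (u v : X) :
    ν/2 * ‖u - v‖^2 ≤ H u - H v - F v (u - v) ∧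
      H u - H v - F v (u - v) ≤ L/2 * ‖u - v‖^2 := by
  set w := u - v with hw
  have e0 : v + (0:ℝ) • w = v := by simp
  have e1 : v + (1:ℝ) • w = u := by simp [hw]
  have hsm : ∀ s : ℝ, 0 ≤ s → ‖s • w‖^2 = s^2 * ‖w‖^2 := by
    intro s hs
    rw [norm_smul, Real.norm_eq_abs, mul_pow, sq_abs]
  have hsub : ∀ s : ℝ, v + s • w - v = s • w := by intro s; abel
  constructor
  · have h1 := aux_mono
      (fun s : ℝ => H (v + s • w) - F v w * s - ν/2 * ‖w‖^2 * s^2)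
      (fun s : ℝ => F (v + s • w) w - F v w - ν * ‖w‖^2 * s)
      (fun s => by
        have hA := hF3 v w s
        have hB : HasDerivAt (fun s : ℝ => F v w * s) (F v w) s := by
          simpa using (hasDerivAt_id s).const_mul (F v w)
        have hC : HasDerivAt (fun s : ℝ => ν/2 * ‖w‖^2 * s^2) (ν * ‖w‖^2 * s) s := by
          have := (hasDerivAt_pow 2 s).const_mul (ν/2 * ‖w‖^2)
          convert this using 1
          exacts [rfl, rfl, by norm_num; ring]
        exact (hA.sub hB).sub hC)
      (fun s hs => by
        rcases eq_or_lt_of_le hs.1 with h0 | h0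
        · simp [← h0]
        · have h2 := hF2 (v + s • w) v
          rw [hsub s] at h2
          have h4 : F (v + s • w) (s • w) = s * F (v + s • w) w := by
            rw [map_smul]; simp
          have h5 : F v (s • w) = s * F v w := by rw [map_smul]; simp
          rw [h4, h5, hsm s h0.le] at h2
          nlinarith [h2, h0])
    simp only [e0, e1, mul_zero, mul_one, zero_pow, one_pow, sub_zero] at h1
    linarith
  · have h1 := aux_mono
      (fun s : ℝ => L/2 * ‖w‖^2 * s^2 - (H (v + s • w) - F v w * s))
      (fun s : ℝ => L * ‖w‖^2 * s - (F (v + s • w) w - F v w))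
      (fun s => by
        have hA := hF3 v w s
        have hB : HasDerivAt (fun s : ℝ => F v w * s) (F v w) s := by
          simpa using (hasDerivAt_id s).const_mul (F v w)
        have hC : HasDerivAt (fun s : ℝ => L/2 * ‖w‖^2 * s^2) (L * ‖w‖^2 * s) s := by
          have := (hasDerivAt_pow 2 s).const_mul (L/2 * ‖w‖^2)
          convert this using 1
          exacts [rfl, rfl, by norm_num; ring]
        exact hC.sub (hA.sub hB))
      (fun s hs => by
        have h2 := hF1 (v + s • w) v w
        rw [hsub s] at h2
        have h3 : ‖s • w‖ = s * ‖w‖ := by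
          rw [norm_smul, Real.norm_eq_abs, abs_of_nonneg hs.1]
        rw [h3] at h2
        have h4 := (abs_le.1 h2).2
        nlinarith [h4, hs.1])
    simp only [e0, e1, mul_zero, mul_one, zero_pow, one_pow, sub_zero] at h1
    linarith

/-- Linear contraction of the quantity `Δ_N = H(u*_N) − H(u*) + γ η_N(u*_N)²`:
under (F1)–(F3), (A1)–(A2) and the perturbed contraction property,
`q < q_Δ < 1` and `Δ_{N+1} ≤ q_Δ Δ_N` for all `N`, hence `Δ_{N+K} ≤ q_Δ^K Δ_N`. -/
theorem stmt_17
    {X : Type*} [NormedAddCommGroup X] [InnerProductSpace ℝ X] [CompleteSpace X]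
    (F : X → X →L[ℝ] ℝ) (L ν : ℝ) (hL : 0 < L) (hν : 0 < ν)
    (hF1 : ∀ u v w : X, |F u w - F v w| ≤ L * ‖u - v‖ * ‖w‖)
    (hF2 : ∀ u v : X, ν * ‖u - v‖ ^ 2 ≤ F u (u - v) - F v (u - v))
    (ustar : X) (hustar : ∀ v : X, F ustar v = 0)
    (H : X → ℝ)
    (hF3 : ∀ v w : X, ∀ t : ℝ, HasDerivAt (fun s : ℝ => H (v + s • w)) (F (v + t • w) w) t)
    (XN : ℕ → Submodule ℝ X) (hclosed : ∀ N : ℕ, IsClosed (XN N : Set X))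
    (hnested : ∀ N : ℕ, XN N ≤ XN (N + 1))
    (ustarN : ℕ → X) (hustarN_mem : ∀ N : ℕ, ustarN N ∈ XN N)
    (hustarN : ∀ N : ℕ, ∀ v ∈ XN N, F (ustarN N) v = 0)
    (η : ℕ → X → ℝ) (C₁ C₂ : ℝ) (hC₁ : 1 ≤ C₁) (hC₂ : 1 ≤ C₂)
    (hηnonneg : ∀ N : ℕ, ∀ v ∈ XN N, 0 ≤ η N v)
    (hA1 : ∀ N : ℕ, ∀ v ∈ XN N, ∀ w ∈ XN N, |η N v - η N w| ≤ C₁ * ‖v - w‖)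
    (hA2 : ∀ N : ℕ, ‖ustar - ustarN N‖ ≤ C₂ * η N (ustarN N))
    (q C₇ : ℝ) (hq0 : 0 < q) (hq1 : q < 1) (hC₇ : 0 < C₇)
    (hperturb : ∀ N : ℕ,
      η (N + 1) (ustarN (N + 1)) ^ 2 ≤
        q * η N (ustarN N) ^ 2 + C₇ * ‖ustarN (N + 1) - ustarN N‖ ^ 2)
    (γ : ℝ) (hγ : γ = ν / (2 * C₇))
    (Δ : ℕ → ℝ) (hΔ : ∀ N : ℕ, Δ N = H (ustarN N) - H ustar + γ * η N (ustarN N) ^ 2)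
    (qΔ : ℝ) (hqΔ : qΔ = (L * C₂ ^ 2 + 2 * γ * q) / (L * C₂ ^ 2 + 2 * γ)) :
    q < qΔ ∧ qΔ < 1 ∧ (∀ N : ℕ, Δ (N + 1) ≤ qΔ * Δ N) ∧
      ∀ N K : ℕ, Δ (N + K) ≤ qΔ ^ K * Δ N := by
  have key := key_bounds F L ν hF1 hF2 H hF3
  have hC₂0 : (0:ℝ) < C₂ := lt_of_lt_of_le one_pos hC₂
  have hγpos : 0 < γ := by rw [hγ]; positivity
  have hApos : 0 < L * C₂ ^ 2 := by positivity
  have hden : 0 < L * C₂ ^ 2 + 2 * γ := by linarith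
  have hqΔ' : qΔ * (L * C₂ ^ 2 + 2 * γ) = L * C₂ ^ 2 + 2 * γ * q := by
    rw [hqΔ]; field_simp
  have hq_lt : q < qΔ := by nlinarith [hqΔ', hApos, hγpos, hq1, hden]
  have hlt1 : qΔ < 1 := by nlinarith [hqΔ', hApos, hγpos, hq1, hden]
  have hγC : γ * C₇ = ν / 2 := by rw [hγ]; field_simp
  have hstep : ∀ N : ℕ, Δ (N + 1) ≤ qΔ * Δ N := by
    intro N
    have hmem : ustarN N - ustarN (N + 1) ∈ XN (N + 1) :=
      sub_mem (hnested N (hustarN_mem N)) (hustarN_mem (N + 1))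
    have hF0 : F (ustarN (N + 1)) (ustarN N - ustarN (N + 1)) = 0 := hustarN (N + 1) _ hmem
    have hGal := (key (ustarN N) (ustarN (N + 1))).1
    rw [hF0] at hGal
    have hE1 := (key (ustarN N) ustar).2
    rw [hustar] at hE1
    have hnormsq : ‖ustarN N - ustar‖ ^ 2 ≤ (C₂ * η N (ustarN N)) ^ 2 := by
      have h := hA2 N
      rw [norm_sub_rev] at h
      exact pow_le_pow_left₀ (norm_nonneg _) h 2
    have h2 : H (ustarN N) - H ustar ≤ L * C₂ ^ 2 / 2 * η N (ustarN N) ^ 2 := by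
      nlinarith [hE1, mul_le_mul_of_nonneg_left hnormsq (by positivity : (0:ℝ) ≤ L / 2)]
    have e2 : ‖ustarN (N + 1) - ustarN N‖ ^ 2 = ‖ustarN N - ustarN (N + 1)‖ ^ 2 := by
      rw [norm_sub_rev]
    have hη := hperturb N
    rw [e2] at hη
    have step1 : H (ustarN (N + 1)) - H ustar + γ * η (N + 1) (ustarN (N + 1)) ^ 2 ≤
        (H (ustarN N) - H ustar) + γ * q * η N (ustarN N) ^ 2 := by
      nlinarith [hGal, mul_le_mul_of_nonneg_left hη hγpos.le, hγC]
    have h1nn : (0:ℝ) ≤ 1 - qΔ := by linarith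
    have h3 := mul_le_mul_of_nonneg_left h2 h1nn
    have h4 : (1 - qΔ) * (L * C₂ ^ 2) = 2 * γ * (qΔ - q) := by linarith [hqΔ']
    have h5 : (1 - qΔ) * (L * C₂ ^ 2) * η N (ustarN N) ^ 2 =
        2 * γ * (qΔ - q) * η N (ustarN N) ^ 2 := by rw [h4]
    rw [hΔ (N + 1), hΔ N]
    linarith [step1, h3, h5]
  refine ⟨hq_lt, hlt1, hstep, ?_⟩
  intro N K
  induction K with
  | zero => simp
  | succ K ih =>
    have hqΔnn : 0 ≤ qΔ := le_of_lt (lt_trans hq0 hq_lt)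
    calc Δ (N + (K + 1)) ≤ qΔ * Δ (N + K) := hstep (N + K)
      _ ≤ qΔ * (qΔ ^ K * Δ N) := mul_le_mul_of_nonneg_left ih hqΔnn
      _ = qΔ ^ (K + 1) * Δ N := by ring
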